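/- Let y = Σ_{n≥0} aₙ xⁿ ∈ ℚ[[x]] be the unique formal power series solution of (1−x²)y'' = x y' + y with a₀ = a₁ = 1 (equivalently y = exp(arcsin x)). Then for every n ≥ 0, n!·aₙ = ∏_{k : 1 ≤ k, 2k < n} (1 + (n−2k)²). -/

import Mathlib

open PowerSeries

/-- Let `y = Σ aₙ xⁿ ∈ ℚ[[x]]` satisfy `(1−x²)y'' = x y' + y` with `a₀ = a₁ = 1`
(i.e. `y = exp(arcsin x)`). Then `n!·aₙ = ∏_{k : 1 ≤ k, 2k < n} (1 + (n−2k)²)`. -/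
theorem stmt5 (y : ℚ⟦X⟧)
    (h0 : PowerSeries.coeff 0 y = 1)
    (h1 : PowerSeries.coeff 1 y = 1)
    (hode : (1 - PowerSeries.X ^ 2) * PowerSeries.derivativeFun (PowerSeries.derivativeFun y)
        = PowerSeries.X * PowerSeries.derivativeFun y + y) :
    ∀ n : ℕ, (n.factorial : ℚ) * PowerSeries.coeff n y
      = ∏ k ∈ (Finset.range n).filter (fun k => 1 ≤ k ∧ 2 * k < n),
          (1 + ((n : ℚ) - 2 * k) ^ 2) := by
  have hcdf : ∀ (f : ℚ⟦X⟧) (n : ℕ), PowerSeries.coeff n f.derivativeFun = PowerSeries.coeff (n + 1) f * (n + 1) :=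
    fun f n => coeff_derivative f n
  have hrec : ∀ n : ℕ, ((n:ℚ)+2)*((n:ℚ)+1)*(PowerSeries.coeff (n+2) y)
      = ((n:ℚ)^2+1)*PowerSeries.coeff n y := by
    intro n
    match n with
    | 0 =>
      have h := congrArg (PowerSeries.coeff 0) hode
      simp only [map_add, sub_mul, one_mul, map_sub, coeff_X_pow_mul',
        hcdf, coeff_zero_X_mul] at h
      push_cast at h ⊢
      norm_num at h ⊢
      linarith
    | 1 =>
      have h := congrArg (PowerSeries.coeff 1) hode
      simp only [map_add, sub_mul, one_mul, map_sub, coeff_X_pow_mul',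
        hcdf, coeff_succ_X_mul, h1] at h
      push_cast at h ⊢
      norm_num at h ⊢
      linarith
    | (m+2) =>
      have h := congrArg (PowerSeries.coeff (m+2)) hode
      have hx : PowerSeries.coeff (m+2) (PowerSeries.X * PowerSeries.derivativeFun y)
          = PowerSeries.coeff (m+1) (PowerSeries.derivativeFun y) :=
        coeff_succ_X_mul (m+1) _
      simp only [map_add, sub_mul, one_mul, map_sub, coeff_X_pow_mul',
        hcdf, hx] at h
      norm_num at h
      push_cast at h ⊢
      nlinarith [h]
  intro n
  induction n using Nat.strong_induction_on with
  | _ n ih =>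
    match n with
    | 0 => simpa using h0
    | 1 =>
      rw [h1]
      rw [Finset.filter_eq_empty_iff.2 (by intro k hk; simp at hk; omega)]
      simp
    | 2 =>
      have h2 := hrec 0
      rw [h0] at h2
      norm_num at h2
      rw [Finset.filter_eq_empty_iff.2 (by intro k hk; simp at hk; omega)]
      simp [Nat.factorial]
      linarith
    | 3 =>
      have h3 := hrec 1
      rw [h1] at h3
      norm_num at h3
      have hs : (Finset.range 3).filter (fun k => 1 ≤ k ∧ 2 * k < 3) = {1} := by decide
      rw [hs]
      simp [Nat.factorial]
      linarith
    | (m+4) =>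
      have key := ih (m+2) (by omega)
      have hr := hrec (m+2)
      have hset : (Finset.range (m+4)).filter (fun k => 1 ≤ k ∧ 2 * k < m+4)
          = insert 1 (((Finset.range (m+2)).filter (fun k => 1 ≤ k ∧ 2 * k < m+2)).image (· + 1)) := by
        ext k
        simp only [Finset.mem_insert, Finset.mem_image, Finset.mem_filter, Finset.mem_range]
        constructor
        · rintro ⟨hk, hk1, hk2⟩
          rcases Nat.eq_or_lt_of_le hk1 with h | h
          · left; omega
          · right; exact ⟨k - 1, ⟨by omega, by omega, by omega⟩, by omega⟩
        · rintro (rfl | ⟨j, ⟨hj, hj1, hj2⟩, rfl⟩) <;> omega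
      have hnotmem : 1 ∉ ((Finset.range (m+2)).filter (fun k => 1 ≤ k ∧ 2 * k < m+2)).image (· + 1) := by
        simp only [Finset.mem_image, Finset.mem_filter, Finset.mem_range]
        rintro ⟨j, ⟨hj, hj1, hj2⟩, hje⟩
        omega
      rw [hset, Finset.prod_insert hnotmem,
        Finset.prod_image (by intro a _ b _ h; simp only at h; omega)]
      have hprod : ∏ j ∈ (Finset.range (m+2)).filter (fun k => 1 ≤ k ∧ 2 * k < m+2),
          (1 + (((m:ℚ)+4) - 2 * (j + 1)) ^ 2)
          = ∏ j ∈ (Finset.range (m+2)).filter (fun k => 1 ≤ k ∧ 2 * k < m+2),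
          (1 + (((m:ℚ)+2) - 2 * j) ^ 2) := by
        apply Finset.prod_congr rfl
        intro j _
        ring_nf
      push_cast
      push_cast at hprod key
      rw [hprod, ← key]
      have hfac : ((m+4).factorial : ℚ) = ((m:ℚ)+4) * ((m:ℚ)+3) * ((m+2).factorial : ℚ) := by
        rw [show m+4 = (m+2)+1+1 from rfl, Nat.factorial_succ, Nat.factorial_succ]
        push_cast
        ring
      rw [hfac]
      push_cast at hr
      nlinarith [hr, key]
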